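/- Let n ≥ 1 and λ ∈ ℝ. The bilinear bracket on g = ℝⁿ × ℝⁿ × ℝ defined by [(p,q,r),(p',q',r')] = (λ(r'p − r p'), −λ(r'q − r q'), 0) is antisymmetric and satisfies the Jacobi identity, so it makes g a Lie algebra; moreover it is dual to the cobracket δ₁ in the sense that for all μ, ν ∈ g and all X ∈ h, ⟨[μ,ν], X⟩ = ⟨μ ⊗ ν, δ₁(X)⟩, where δ₁(x,y,z) = λ·((x,−y,0) ⊗ e_z − e_z ⊗ (x,−y,0)) with e_z = (0,0,1). -/

import Mathlib

open scoped TensorProduct BigOperators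

noncomputable section

/-- The underlying space `ℝⁿ × ℝⁿ × ℝ`, serving both as the Heisenberg Lie
algebra `h` and (via the dual pairing) its dual space `g = h*`. -/
abbrev Heis (n : ℕ) : Type := (Fin n → ℝ) × (Fin n → ℝ) × ℝ

/-- The dual pairing `⟨(p,q,r),(x,y,z)⟩ = ⟨p,x⟩ + ⟨q,y⟩ + rz`, as a linear map
in the second variable. -/
def pairL {n : ℕ} (μ : Heis n) : Heis n →ₗ[ℝ] ℝ where
  toFun X := (∑ i, μ.1 i * X.1 i) + (∑ i, μ.2.1 i * X.2.1 i) + μ.2.2 * X.2.2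
  map_add' X Y := by
    simp only [Prod.fst_add, Prod.snd_add, Pi.add_apply]
    simp [mul_add, Finset.sum_add_distrib]
    ring
  map_smul' c X := by
    simp only [Prod.smul_fst, Prod.smul_snd, Pi.smul_apply, smul_eq_mul, RingHom.id_apply,
      mul_add, Finset.mul_sum]
    congr 1
    · congr 1
      · exact Finset.sum_congr rfl fun i _ => by ring
      · exact Finset.sum_congr rfl fun i _ => by ring
    · ring

/-- The pairing extended to tensor squares: `⟨μ ⊗ ν, a ⊗ b⟩ = ⟨μ,a⟩⟨ν,b⟩`. -/
def pairT {n : ℕ} (μ ν : Heis n) : (Heis n ⊗[ℝ] Heis n) →ₗ[ℝ] ℝ :=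
  TensorProduct.lift ((LinearMap.mul ℝ ℝ).compl₁₂ (pairL μ) (pairL ν))

/-- The central basis vector `e_z = (0,0,1)`. -/
def ez (n : ℕ) : Heis n := (0, 0, 1)

/-- The cobracket `δ₁(x,y,z) = λ·((x,−y,0) ⊗ e_z − e_z ⊗ (x,−y,0))`. -/
def delta1 {n : ℕ} (lam : ℝ) (v : Heis n) : Heis n ⊗[ℝ] Heis n :=
  lam • (((v.1, -v.2.1, (0:ℝ)) : Heis n) ⊗ₜ[ℝ] ez n
          - ez n ⊗ₜ[ℝ] ((v.1, -v.2.1, (0:ℝ)) : Heis n))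

/-- The bracket `[(p,q,r),(p',q',r')] = (λ(r'p − rp'), −λ(r'q − rq'), 0)` on
`g = ℝⁿ × ℝⁿ × ℝ`. -/
def gBr1 {n : ℕ} (lam : ℝ) (μ ν : Heis n) : Heis n :=
  (lam • (ν.2.2 • μ.1 - μ.2.2 • ν.1), -(lam • (ν.2.2 • μ.2.1 - μ.2.2 • ν.2.1)), 0)

/-- The bracket `[(p,q,r),(p',q',r')] = (λ(r'p − rp'), −λ(r'q − rq'), 0)` on
`g = ℝⁿ × ℝⁿ × ℝ` is bilinear, antisymmetric and satisfies the Jacobi identity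
(so it makes `g` a Lie algebra); moreover it is dual to the cobracket `δ₁`:
`⟨[μ,ν], X⟩ = ⟨μ ⊗ ν, δ₁(X)⟩` for all `μ, ν ∈ g` and `X ∈ h`. -/
theorem gBr1_lie_algebra_dual_to_delta1 (n : ℕ) (hn : 1 ≤ n) (lam : ℝ) :
    (∀ (c : ℝ) (μ μ' ν : Heis n),
        gBr1 lam (c • μ + μ') ν = c • gBr1 lam μ ν + gBr1 lam μ' ν) ∧
    (∀ (c : ℝ) (μ ν ν' : Heis n),
        gBr1 lam μ (c • ν + ν') = c • gBr1 lam μ ν + gBr1 lam μ ν') ∧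
    (∀ μ ν : Heis n, gBr1 lam μ ν = - gBr1 lam ν μ) ∧
    (∀ μ ν ρ : Heis n,
        gBr1 lam μ (gBr1 lam ν ρ) + gBr1 lam ν (gBr1 lam ρ μ)
          + gBr1 lam ρ (gBr1 lam μ ν) = 0) ∧
    (∀ (μ ν X : Heis n), pairL (gBr1 lam μ ν) X = pairT μ ν (delta1 lam X)) := by
  refine ⟨?_, ?_, ?_, ?_, ?_⟩
  · intro c μ μ' ν
    simp only [gBr1, Prod.smul_fst, Prod.smul_snd, Prod.fst_add, Prod.snd_add, Prod.mk_add_mk,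
      Prod.smul_mk, smul_eq_mul]
    refine Prod.ext (funext fun i => ?_) (Prod.ext (funext fun i => ?_) (by simp))
    · simp [mul_add, mul_sub]; ring
    · simp [mul_add, mul_sub]; ring
  · intro c μ ν ν'
    simp only [gBr1, Prod.smul_fst, Prod.smul_snd, Prod.fst_add, Prod.snd_add, Prod.mk_add_mk,
      Prod.smul_mk, smul_eq_mul]
    refine Prod.ext (funext fun i => ?_) (Prod.ext (funext fun i => ?_) (by simp))
    · simp [mul_add, mul_sub]; ring
    · simp [mul_add, mul_sub]; ring
  · intro μ ν
    simp only [gBr1, Prod.neg_mk]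
    refine Prod.ext (funext fun i => ?_) (Prod.ext (funext fun i => ?_) (by simp))
    · simp; ring
    · simp; ring
  · intro μ ν ρ
    simp only [gBr1, Prod.mk_add_mk]
    refine Prod.ext (funext fun i => ?_) (Prod.ext (funext fun i => ?_) (by simp))
    · simp; ring
    · simp; ring
  · intro μ ν X
    simp only [delta1, pairT, gBr1, map_smul, map_sub, TensorProduct.lift.tmul,
      LinearMap.compl₁₂_apply, LinearMap.mul_apply', smul_eq_mul]
    simp only [pairL, ez, LinearMap.coe_mk, AddHom.coe_mk, Pi.smul_apply, smul_eq_mul,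
      Pi.sub_apply, Pi.neg_apply, Pi.zero_apply]
    simp only [mul_zero, zero_mul, mul_one, one_mul, add_zero, zero_add, mul_neg, neg_mul,
      Finset.sum_const_zero, mul_sub, sub_mul, mul_add, add_mul, Finset.mul_sum, Finset.sum_mul,
      Finset.sum_sub_distrib, Finset.sum_add_distrib, Finset.sum_neg_distrib]
    ring_nf

end
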